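/- Let F be any field and let T be the alternating trilinear form on V = F^6 with trivector t = f_{156} + f_{246} + f_{345}. Then no subspace of V of dimension greater than 3 is totally T-singular. -/

import Mathlib

open Module

def cT (F : Type*) [Field F] (i j k : Fin 6) : F :=
  if ((i : ℕ), (j : ℕ), (k : ℕ)) ∈
      [((0:ℕ), (4:ℕ), (5:ℕ)), (1, 3, 5), (2, 3, 4)] then 1 else 0

def tvT (F : Type*) [Field F] (i j k : Fin 6) : F :=
  cT F i j k - cT F j i k + cT F j k i - cT F k j i + cT F k i j - cT F i k j

lemma cT_zero (F : Type*) [Field F] (i j k : Fin 6)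
    (h : ¬((i : ℕ) < (j : ℕ) ∧ (j : ℕ) < (k : ℕ))) : cT F i j k = 0 := by
  unfold cT
  split_ifs with hm
  · exfalso; simp [Prod.ext_iff] at hm; omega
  · rfl

/-- Over any field, for the alternating trilinear form on `F⁶` with trivector
`t = f₁₅₆ + f₂₄₆ + f₃₄₅`, no subspace of dimension greater than 3 is totally
singular. (0-based indices.) -/
theorem stmt_15 (F : Type*) [Field F]
    (T : AlternatingMap F (Fin 6 → F) F (Fin 3))
    (hT : ∀ i j k : Fin 6, i < j → j < k →
      T ![Pi.single i 1, Pi.single j 1, Pi.single k 1] =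
        if ((i : ℕ), (j : ℕ), (k : ℕ)) ∈
            [((0:ℕ), (4:ℕ), (5:ℕ)), (1, 3, 5), (2, 3, 4)] then 1 else 0) :
    ∀ W : Submodule F (Fin 6 → F),
      (∀ a ∈ W, ∀ b ∈ W, ∀ x, T ![a, b, x] = 0) → Module.finrank F W ≤ 3 := by
  intro W hW
  by_contra hc
  push_neg at hc
  set e : Fin 6 → (Fin 6 → F) := fun i => Pi.single i 1 with he
  -- swap lemmas
  have s01 : ∀ x y z : Fin 6 → F, T ![x, y, z] = -T ![y, x, z] := by
    intro x y z
    have h := T.map_swap (v := ![y, x, z]) (i := (0 : Fin 3)) (j := 1) (by decide)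
    have hv : ![y, x, z] ∘ Equiv.swap (0 : Fin 3) 1 = ![x, y, z] := by
      funext s; fin_cases s <;> simp [Equiv.swap_apply_def]
    rw [hv] at h; rw [h]
  have s12 : ∀ x y z : Fin 6 → F, T ![x, y, z] = -T ![x, z, y] := by
    intro x y z
    have h := T.map_swap (v := ![x, z, y]) (i := (1 : Fin 3)) (j := 2) (by decide)
    have hv : ![x, z, y] ∘ Equiv.swap (1 : Fin 3) 2 = ![x, y, z] := by
      funext s; fin_cases s <;> simp [Equiv.swap_apply_def]
    rw [hv] at h; rw [h]
  have s02 : ∀ x y z : Fin 6 → F, T ![x, y, z] = -T ![z, y, x] := by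
    intro x y z
    have h := T.map_swap (v := ![z, y, x]) (i := (0 : Fin 3)) (j := 2) (by decide)
    have hv : ![z, y, x] ∘ Equiv.swap (0 : Fin 3) 2 = ![x, y, z] := by
      funext s; fin_cases s <;> simp [Equiv.swap_apply_def]
    rw [hv] at h; rw [h]
  have hsort : ∀ a b c : Fin 6, (a : ℕ) < b → (b : ℕ) < c →
      T ![e a, e b, e c] = cT F a b c := by
    intro a b c hab hbc
    rw [he]; rw [hT a b c hab hbc]; rfl
  -- values on basis vectors
  have Tval : ∀ i j k : Fin 6, T ![e i, e j, e k] = tvT F i j k := by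
    intro i j k
    rcases eq_or_ne i j with rfl | hij
    · rw [T.map_eq_zero_of_eq ![e i, e i, e k] (i := 0) (j := 1) rfl (by decide)]
      unfold tvT; ring
    rcases eq_or_ne i k with rfl | hik
    · rw [T.map_eq_zero_of_eq ![e i, e j, e i] (i := 0) (j := 2) rfl (by decide)]
      unfold tvT; ring
    rcases eq_or_ne j k with rfl | hjk
    · rw [T.map_eq_zero_of_eq ![e i, e j, e j] (i := 1) (j := 2) rfl (by decide)]
      unfold tvT; ring
    have hij' : (i : ℕ) ≠ j := fun h => hij (Fin.ext h)
    have hik' : (i : ℕ) ≠ k := fun h => hik (Fin.ext h)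
    have hjk' : (j : ℕ) ≠ k := fun h => hjk (Fin.ext h)
    rcases lt_or_gt_of_ne hij' with h1 | h1
    · rcases lt_or_gt_of_ne hjk' with h2 | h2
      · rw [hsort i j k h1 h2]
        unfold tvT
        rw [cT_zero F j i k (by omega), cT_zero F j k i (by omega),
          cT_zero F k j i (by omega), cT_zero F k i j (by omega),
          cT_zero F i k j (by omega)]
        ring
      · rcases lt_or_gt_of_ne hik' with h3 | h3
        · rw [s12, hsort i k j h3 h2]
          unfold tvT
          rw [cT_zero F i j k (by omega), cT_zero F j i k (by omega),
            cT_zero F j k i (by omega), cT_zero F k j i (by omega),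
            cT_zero F k i j (by omega)]
          ring
        · rw [s02, s12, hsort k i j h3 h1]
          unfold tvT
          rw [cT_zero F i j k (by omega), cT_zero F j i k (by omega),
            cT_zero F j k i (by omega), cT_zero F k j i (by omega),
            cT_zero F i k j (by omega)]
          ring
    · rcases lt_or_gt_of_ne hik' with h2 | h2
      · rw [s01, hsort j i k h1 h2]
        unfold tvT
        rw [cT_zero F i j k (by omega), cT_zero F j k i (by omega),
          cT_zero F k j i (by omega), cT_zero F k i j (by omega),
          cT_zero F i k j (by omega)]
        ring
      · rcases lt_or_gt_of_ne hjk' with h3 | h3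
        · rw [s01, s12, hsort j k i h3 h2]
          unfold tvT
          rw [cT_zero F i j k (by omega), cT_zero F j i k (by omega),
            cT_zero F k j i (by omega), cT_zero F k i j (by omega),
            cT_zero F i k j (by omega)]
          ring
        · rw [s02, hsort k j i h3 h1]
          unfold tvT
          rw [cT_zero F i j k (by omega), cT_zero F j i k (by omega),
            cT_zero F j k i (by omega), cT_zero F k i j (by omega),
            cT_zero F i k j (by omega)]
          ring
  -- expansion lemmas
  have exp0 : ∀ a b x : Fin 6 → F, T ![a, b, x] = ∑ i, a i * T ![e i, b, x] := by
    intro a b x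
    have hrep : a = ∑ i, a i • e i := by
      funext j; rw [Finset.sum_apply]; simp [he, Pi.single_apply]
    have upd0 : ∀ y : Fin 6 → F, Function.update ![a, b, x] 0 y = ![y, b, x] := by
      intro y; funext s; fin_cases s <;> simp [Function.update]
    conv_lhs => rw [hrep]
    rw [← upd0 (∑ i, a i • e i)]
    have h := T.toMultilinearMap.map_update_sum Finset.univ (0 : Fin 3)
      (fun i : Fin 6 => a i • e i) ![a, b, x]
    simp only [AlternatingMap.coe_multilinearMap] at h
    rw [h]
    refine Finset.sum_congr rfl fun i _ => ?_
    rw [T.map_update_smul, upd0, smul_eq_mul]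
  have exp1 : ∀ a b x : Fin 6 → F, T ![a, b, x] = ∑ j, b j * T ![a, e j, x] := by
    intro a b x
    have hrep : b = ∑ j, b j • e j := by
      funext i; rw [Finset.sum_apply]; simp [he, Pi.single_apply]
    have upd1 : ∀ y : Fin 6 → F, Function.update ![a, b, x] 1 y = ![a, y, x] := by
      intro y; funext s; fin_cases s <;> simp [Function.update]
    conv_lhs => rw [hrep]
    rw [← upd1 (∑ j, b j • e j)]
    have h := T.toMultilinearMap.map_update_sum Finset.univ (1 : Fin 3)
      (fun j : Fin 6 => b j • e j) ![a, b, x]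
    simp only [AlternatingMap.coe_multilinearMap] at h
    rw [h]
    refine Finset.sum_congr rfl fun j _ => ?_
    rw [T.map_update_smul, upd1, smul_eq_mul]
  have Texp : ∀ (a b : Fin 6 → F) (k : Fin 6),
      T ![a, b, e k] = ∑ i, ∑ j, a i * (b j * tvT F i j k) := by
    intro a b k
    rw [exp0]
    refine Finset.sum_congr rfl fun i _ => ?_
    rw [exp1, Finset.mul_sum]
    refine Finset.sum_congr rfl fun j _ => ?_
    rw [Tval]
  -- the three Plücker-type conditions
  have hminor : ∀ u ∈ W, ∀ v ∈ W,
      u 4 * v 5 - u 5 * v 4 = 0 ∧ u 3 * v 5 - u 5 * v 3 = 0 ∧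
        u 3 * v 4 - u 4 * v 3 = 0 := by
    intro u hu v hv
    have h0 := hW u hu v hv (e 0)
    have h1 := hW u hu v hv (e 1)
    have h2 := hW u hu v hv (e 2)
    rw [Texp] at h0 h1 h2
    simp +decide [Fin.sum_univ_six, tvT, cT] at h0 h1 h2
    exact ⟨by linear_combination h0, by linear_combination h1, by linear_combination h2⟩
  by_cases hK : ∀ w ∈ W, w 3 = 0 ∧ w 4 = 0 ∧ w 5 = 0
  · -- W is contained in the span of e₀, e₁, e₂
    have hle : W ≤ Submodule.span F (Set.range ![e 0, e 1, e 2]) := by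
      intro w hw
      rw [Submodule.mem_span_range_iff_exists_fun]
      refine ⟨![w 0, w 1, w 2], ?_⟩
      obtain ⟨h3, h4, h5⟩ := hK w hw
      funext j
      rw [Finset.sum_apply]
      fin_cases j <;>
        simp [Fin.sum_univ_three, he, Pi.single_apply, Matrix.vecHead, Matrix.vecTail,
          h3, h4, h5]
    have h1 : finrank F W ≤ finrank F (Submodule.span F (Set.range ![e 0, e 1, e 2])) :=
      Submodule.finrank_mono hle
    have h2 := finrank_range_le_card (R := F) ![e 0, e 1, e 2]
    simp [Set.finrank] at h2
    omega
  · push_neg at hK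
    obtain ⟨w0, hw0W, hw0⟩ := hK
    have hw0' : ¬(w0 3 = 0 ∧ w0 4 = 0 ∧ w0 5 = 0) := by
      intro h
      rcases h with ⟨h3, h4, h5⟩
      exact (hw0 h3 h4) h5
    have hdep : ∀ w ∈ W, ∃ cc : F,
        w 3 = cc * w0 3 ∧ w 4 = cc * w0 4 ∧ w 5 = cc * w0 5 := by
      intro w hw
      obtain ⟨m45, m35, m34⟩ := hminor w hw w0 hw0W
      by_cases h3 : w0 3 = 0
      · by_cases h4 : w0 4 = 0
        · have h5 : w0 5 ≠ 0 := fun h5 => hw0' ⟨h3, h4, h5⟩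
          refine ⟨w 5 / w0 5, ?_, ?_, ?_⟩
          · field_simp; linear_combination m35
          · field_simp; linear_combination m45
          · rw [div_mul_cancel₀ _ h5]
        · refine ⟨w 4 / w0 4, ?_, ?_, ?_⟩
          · field_simp; linear_combination m34
          · rw [div_mul_cancel₀ _ h4]
          · field_simp; linear_combination -m45
      · refine ⟨w 3 / w0 3, ?_, ?_, ?_⟩
        · rw [div_mul_cancel₀ _ h3]
        · field_simp; linear_combination -m34
        · field_simp; linear_combination -m35
    have hle : W ≤ Submodule.span F (Set.range ![e 0, e 1, e 2, w0]) := by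
      intro w hw
      obtain ⟨cc, h3, h4, h5⟩ := hdep w hw
      rw [Submodule.mem_span_range_iff_exists_fun]
      refine ⟨![w 0 - cc * w0 0, w 1 - cc * w0 1, w 2 - cc * w0 2, cc], ?_⟩
      funext j
      rw [Finset.sum_apply]
      fin_cases j <;>
        simp [Fin.sum_univ_four, he, Pi.single_apply, Matrix.vecHead, Matrix.vecTail] <;>
        first
          | exact h3.symm
          | exact h4.symm
          | exact h5.symm
    have h1 : finrank F W ≤
        finrank F (Submodule.span F (Set.range ![e 0, e 1, e 2, w0])) :=
      Submodule.finrank_mono hle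
    have h2 := finrank_range_le_card (R := F) ![e 0, e 1, e 2, w0]
    simp [Set.finrank] at h2
    have heq : W = Submodule.span F (Set.range ![e 0, e 1, e 2, w0]) :=
      Submodule.eq_of_le_of_finrank_eq hle (by omega)
    have he0 : e 0 ∈ W := by rw [heq]; exact Submodule.subset_span ⟨0, by simp⟩
    have he1 : e 1 ∈ W := by rw [heq]; exact Submodule.subset_span ⟨1, by simp⟩
    have c5 := hW (e 0) he0 w0 hw0W (e 4)
    have c4 := hW (e 0) he0 w0 hw0W (e 5)
    have c3 := hW (e 1) he1 w0 hw0W (e 5)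
    rw [Texp] at c5 c4 c3
    simp +decide [Fin.sum_univ_six, tvT, cT, he, Pi.single_apply] at c5 c4 c3
    exact hw0' ⟨c3, c4, c5⟩
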